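/- Let ξ, ζ be in the open unit disc 𝔻 ⊆ ℂ and θ ∈ ℝ, and set w = τ_ζ(e^{iθ}·ξ). Then |(ξ − w)/(1 − conj(w)·ξ)| = | 2i·ξ·sin(θ/2) + ζ·e^{−iθ/2} − conj(ζ)·e^{iθ/2}·ξ² | / | 2i·( sin(θ/2) + Im(ζ·conj(ξ)·e^{−iθ/2}) ) − e^{iθ/2}·(1 − |ξ|²) |; consequently the Poincaré distance satisfies d_P(ξ, τ_ζ(e^{iθ}ξ)) = 2·artanh of the right-hand side. -/

import Mathlib

/-- The inverse hyperbolic tangent. -/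
noncomputable def artanh (x : ℝ) : ℝ := Real.log ((1 + x) / (1 - x)) / 2

/-- The Poincaré distance on the unit disc. -/
noncomputable def dP (z w : ℂ) : ℝ :=
  2 * artanh (norm (z - w) / norm (1 - (starRingEnd ℂ) w * z))

/-- The Möbius automorphism `τ_ζ(ξ) = (ξ + ζ)/(1 + conj(ζ) ξ)` of the unit disc. -/
noncomputable def moebius (ζ ξ : ℂ) : ℂ := (ξ + ζ) / (1 + (starRingEnd ℂ) ζ * ξ)

/-- formula for the Poincaré distance `d_P(ξ, τ_ζ(e^{iθ}ξ))`. -/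
theorem stmt_16 (ξ ζ : ℂ) (hξ : norm ξ < 1) (hζ : norm ζ < 1) (θ : ℝ)
    (w : ℂ) (hw : w = moebius ζ (Complex.exp (θ * Complex.I) * ξ)) :
    norm ((ξ - w) / (1 - (starRingEnd ℂ) w * ξ)) =
      norm (2 * Complex.I * ξ * (Real.sin (θ / 2) : ℂ)
          + ζ * Complex.exp (-(θ / 2) * Complex.I)
          - (starRingEnd ℂ) ζ * Complex.exp ((θ / 2) * Complex.I) * ξ ^ 2) /
        norm (2 * Complex.I *
            ((Real.sin (θ / 2)
              + (ζ * (starRingEnd ℂ) ξ * Complex.exp (-(θ / 2) * Complex.I)).im : ℝ) : ℂ)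
          - Complex.exp ((θ / 2) * Complex.I) * (1 - (norm ξ : ℂ) ^ 2)) ∧
    dP ξ w =
      2 * artanh (norm (2 * Complex.I * ξ * (Real.sin (θ / 2) : ℂ)
          + ζ * Complex.exp (-(θ / 2) * Complex.I)
          - (starRingEnd ℂ) ζ * Complex.exp ((θ / 2) * Complex.I) * ξ ^ 2) /
        norm (2 * Complex.I *
            ((Real.sin (θ / 2)
              + (ζ * (starRingEnd ℂ) ξ * Complex.exp (-(θ / 2) * Complex.I)).im : ℝ) : ℂ)
          - Complex.exp ((θ / 2) * Complex.I) * (1 - (norm ξ : ℂ) ^ 2))) := by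

  set h : ℂ := Complex.exp ((θ : ℂ) / 2 * Complex.I) with hh
  set g : ℂ := Complex.exp (-((θ : ℂ) / 2) * Complex.I) with hg
  have hgh : h * g = 1 := by
    rw [hh, hg, ← Complex.exp_add, show (θ:ℂ)/2*Complex.I + -((θ:ℂ)/2)*Complex.I = 0 by ring,
      Complex.exp_zero]
  have habsh : norm h = 1 := by
    rw [hh, show (θ:ℂ)/2*Complex.I = ((θ/2 : ℝ) : ℂ) * Complex.I by push_cast; ring]
    exact Complex.norm_exp_ofReal_mul_I _
  have habsg : norm g = 1 := by
    rw [hg, show -((θ:ℂ)/2)*Complex.I = ((-(θ/2) : ℝ) : ℂ) * Complex.I by push_cast; ring]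
    exact Complex.norm_exp_ofReal_mul_I _
  have hconjg : (starRingEnd ℂ) g = h := by
    rw [hg, hh, ← Complex.exp_conj]
    congr 1
    simp [map_mul, map_neg, map_div₀, Complex.conj_I, Complex.conj_ofReal, map_ofNat]
  have hconjh : (starRingEnd ℂ) h = g := by
    rw [← hconjg, Complex.conj_conj]
  have he : Complex.exp ((θ : ℂ) * Complex.I) = h * h := by
    rw [hh, ← Complex.exp_add]
    congr 1
    ring
  -- sin and im identities
  have hsin2 : (2 : ℂ) * (Real.sin (θ / 2) : ℂ) * Complex.I = h - g := by
    rw [Complex.ofReal_sin, show ((θ/2 : ℝ) : ℂ) = (θ:ℂ)/2 by push_cast; ring, Complex.sin,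
      hh, hg]
    have hI : Complex.I * Complex.I = -1 := Complex.I_mul_I
    linear_combination (Complex.exp (-((θ:ℂ)/2)*Complex.I)
      - Complex.exp ((θ:ℂ)/2*Complex.I)) * hI
  have him : (2 : ℂ) * Complex.I * (((ζ * (starRingEnd ℂ) ξ * g).im : ℝ) : ℂ)
      = ζ * (starRingEnd ℂ) ξ * g - (starRingEnd ℂ) ζ * ξ * h := by
    have h1 := Complex.sub_conj (ζ * (starRingEnd ℂ) ξ * g)
    simp only [map_mul, Complex.conj_conj, hconjg] at h1
    push_cast at h1
    linear_combination -h1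
  have habsξ : ((norm ξ : ℝ) : ℂ) ^ 2 = ξ * (starRingEnd ℂ) ξ := by
    rw [← Complex.ofReal_pow, Complex.sq_norm]
    exact (Complex.mul_conj ξ).symm
  -- the denominator of the Möbius map
  rw [he] at hw
  set D : ℂ := 1 + (starRingEnd ℂ) ζ * (h * h * ξ) with hDdef
  have hDne : D ≠ 0 := by
    intro hc
    have habsu : norm ((starRingEnd ℂ) ζ * (h * h * ξ)) < 1 := by
      rw [norm_mul, norm_mul, norm_mul, Complex.norm_conj, habsh]
      have h0 : (0:ℝ) ≤ norm ζ := norm_nonneg _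
      have h1 : (0:ℝ) ≤ norm ξ := norm_nonneg _
      nlinarith
    have hm1 : (starRingEnd ℂ) ζ * (h * h * ξ) = -1 := by linear_combination hc
    rw [hm1] at habsu
    norm_num at habsu
  have hwD : w * D = h * h * ξ + ζ := by
    rw [hw, moebius]
    exact div_mul_cancel₀ _ hDne
  have hwD' : (starRingEnd ℂ) w * (starRingEnd ℂ) D
      = g * g * (starRingEnd ℂ) ξ + (starRingEnd ℂ) ζ := by
    have := congrArg (starRingEnd ℂ) hwD
    simpa only [map_mul, map_add, hconjh, Complex.conj_conj] using this
  have hcD : (starRingEnd ℂ) D = 1 + ζ * (g * g * (starRingEnd ℂ) ξ) := by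
    rw [hDdef]
    simp only [map_add, map_mul, map_one, Complex.conj_conj, hconjh]
  have hcDne : (starRingEnd ℂ) D ≠ 0 := by
    simpa using hDne
  -- abbreviations for the RHS numerator and denominator
  set N : ℂ := 2 * Complex.I * ξ * (Real.sin (θ / 2) : ℂ) + ζ * g - (starRingEnd ℂ) ζ * h * ξ ^ 2
    with hN
  set M : ℂ := 2 * Complex.I * ((Real.sin (θ / 2)
      + (ζ * (starRingEnd ℂ) ξ * g).im : ℝ) : ℂ) - h * (1 - (norm ξ : ℂ) ^ 2) with hM
  -- the key algebraic identities
  have key1 : (ξ - w) * D = -h * N := by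
    rw [hN, hDdef]
    linear_combination -hwD + ξ * h * hsin2 + (ζ - ξ) * hgh
  have key2 : (1 - (starRingEnd ℂ) w * ξ) * (starRingEnd ℂ) D
      = (2 * Complex.I * ((Real.sin (θ / 2) : ℂ)
          + (((ζ * (starRingEnd ℂ) ξ * g).im : ℝ) : ℂ)) + g * (1 - (norm ξ : ℂ) ^ 2)) * g := by
    rw [hcD]
    linear_combination -ξ * hwD' + (starRingEnd ℂ) w * ξ * hcD + g * g * habsξ + (-g) * hsin2
      + (-g) * him + ((starRingEnd ℂ) ζ * ξ - 1) * hgh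
  have e1 : ξ - w = -h * N / D := by
    rw [eq_div_iff hDne]; exact key1
  have e2 : 1 - (starRingEnd ℂ) w * ξ
      = (2 * Complex.I * ((Real.sin (θ / 2) : ℂ)
          + (((ζ * (starRingEnd ℂ) ξ * g).im : ℝ) : ℂ)) + g * (1 - (norm ξ : ℂ) ^ 2)) * g
        / (starRingEnd ℂ) D := by
    rw [eq_div_iff hcDne]; exact key2
  have habsM : norm (2 * Complex.I * ((Real.sin (θ / 2) : ℂ)
          + (((ζ * (starRingEnd ℂ) ξ * g).im : ℝ) : ℂ)) + g * (1 - (norm ξ : ℂ) ^ 2))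
      = norm M := by
    have hcden : (starRingEnd ℂ) M = -(2 * Complex.I * ((Real.sin (θ / 2) : ℂ)
          + (((ζ * (starRingEnd ℂ) ξ * g).im : ℝ) : ℂ)) + g * (1 - (norm ξ : ℂ) ^ 2)) := by
      rw [hM, Complex.ofReal_add]
      simp only [map_sub, map_add, map_mul, map_one, map_pow, map_ofNat, Complex.conj_I,
        Complex.conj_ofReal, hconjh]
      ring
    rw [← Complex.norm_conj M, hcden, norm_neg]
  have habscD : norm ((starRingEnd ℂ) D) = norm D := Complex.norm_conj D
  have main : norm (ξ - w) / norm (1 - (starRingEnd ℂ) w * ξ)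
      = norm N / norm M := by
    rw [e1, e2, norm_div, norm_div, habscD, norm_mul, norm_mul, norm_neg, habsh,
      habsg, one_mul, mul_one, habsM, div_div_div_cancel_right₀ (norm_ne_zero_iff.mpr hDne)]
  refine ⟨?_, ?_⟩
  · rw [norm_div]; exact main
  · rw [dP, main]
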